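/- Let λ ≥ 1 and let q ∈ [2, ∞) with q ≠ 4, and let q' = q/(q − 1) be the conjugate exponent. Set μ = 1/4 if 2 ≤ q < 4 and μ = 1/2 − 1/q if q > 4. Suppose p : ℝ → [0, ∞) is measurable and satisfies p(r) ≤ λ(1 + λ|r|)^(−1/2) whenever |r| < 1, and p(r) ≤ λ^(1/2) e^(−|r|/2) whenever |r| ≥ 1. Then there is a constant C, depending only on q, such that for every h ∈ L^{q'}(ℝ), the function t ↦ ∫_ℝ p(|t − s|) h(s) ds lies in L^q(ℝ) with ‖∫_ℝ p(|· − s|) h(s) ds‖_{L^q(ℝ)} ≤ C λ^(2μ) ‖h‖_{L^{q'}(ℝ)}. -/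

import Mathlib

open MeasureTheory Real

open ENNReal Set

lemma rpow_split (x : ℝ≥0∞) {a c d : ℝ} (ha : 0 < a) (hc : 0 ≤ c) (hd : 0 ≤ d)
    (h : c + d = 1/a) : (x ^ a) ^ c * (x ^ a) ^ d = x := by
  rw [← ENNReal.rpow_add_of_nonneg _ _ hc hd, h, ← ENNReal.rpow_mul, mul_one_div,
    div_self ha.ne', ENNReal.rpow_one]

lemma young {g f : ℝ → ℝ≥0∞} (hg : Measurable g) (hf : Measurable f)
    {q a b : ℝ} (ha : 0 < a) (hb : 0 < b) (hq : 0 < q)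
    (hay : 1/q ≤ 1/a) (hbz : 1/q ≤ 1/b) (hsum : 1/a + 1/b = 1 + 1/q) :
    ∫⁻ t, (∫⁻ s, g (t - s) * f s) ^ q ≤
      (∫⁻ r, g r ^ a) ^ (q/a) * (∫⁻ s, f s ^ b) ^ (q/b) := by
  have hq' : (0:ℝ) ≤ 1/q := by positivity
  have hay' : (0:ℝ) ≤ 1/a - 1/q := by linarith
  have hbz' : (0:ℝ) ≤ 1/b - 1/q := by linarith
  set A := ∫⁻ r, g r ^ a with hA
  set B := ∫⁻ s, f s ^ b with hB
  have hga : Measurable fun r => g r ^ a := hg.pow_const a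
  have hfb : Measurable fun s => f s ^ b := hf.pow_const b
  have htrans : ∀ t : ℝ, ∫⁻ s, g (t - s) ^ a = A := by
    intro t
    have h1 : MeasurePreserving (fun s : ℝ => t - s) volume volume :=
      (measurePreserving_add_left volume t).comp (Measure.measurePreserving_neg volume)
    simpa [sub_eq_add_neg] using h1.lintegral_comp hga
  have htrans2 : ∀ s : ℝ, ∫⁻ t, g (t - s) ^ a = A := fun s =>
    (measurePreserving_sub_right volume s).lintegral_comp hga
  have hF0 : Measurable fun z : ℝ × ℝ => g (z.1 - z.2) ^ a * f z.2 ^ b :=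
    (hga.comp (measurable_fst.sub measurable_snd)).mul (hfb.comp measurable_snd)
  have hF0' : Measurable fun t : ℝ => ∫⁻ s, g (t - s) ^ a * f s ^ b :=
    hF0.lintegral_prod_right'
  -- Step 1: three-function Hölder
  have step1 : ∀ t : ℝ, (∫⁻ s, g (t - s) * f s) ≤
      (∫⁻ s, g (t - s) ^ a * f s ^ b) ^ (1/q) * (A ^ (1/a - 1/q) * B ^ (1/b - 1/q)) := by
    intro t
    have hmeas : ∀ i ∈ (Finset.univ : Finset (Fin 3)),
        AEMeasurable ((![fun s => g (t - s) ^ a * f s ^ b,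
          fun s => g (t - s) ^ a, fun s => f s ^ b] : Fin 3 → ℝ → ℝ≥0∞) i) volume := by
      intro i _
      fin_cases i
      · exact ((hga.comp (measurable_const.sub measurable_id)).mul hfb).aemeasurable
      · exact (hga.comp (measurable_const.sub measurable_id)).aemeasurable
      · exact hfb.aemeasurable
    have hsum' : ∑ i : Fin 3, (![1/q, 1/a - 1/q, 1/b - 1/q] : Fin 3 → ℝ) i = 1 := by
      rw [Fin.sum_univ_three]
      simp only [Matrix.cons_val_zero, Matrix.cons_val_one, Matrix.head_cons,
        Matrix.cons_val_two, Matrix.tail_cons]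
      linarith
    have hpos : ∀ i ∈ (Finset.univ : Finset (Fin 3)),
        0 ≤ (![1/q, 1/a - 1/q, 1/b - 1/q] : Fin 3 → ℝ) i := by
      intro i _; fin_cases i <;>
        simp only [Matrix.cons_val_zero, Matrix.cons_val_one, Matrix.head_cons,
          Matrix.cons_val_two, Matrix.tail_cons] <;>
        first | positivity | linarith
    have H := ENNReal.lintegral_prod_norm_pow_le (μ := (volume : Measure ℝ))
      Finset.univ hmeas hsum' hpos
    simp only [Fin.prod_univ_three, Matrix.cons_val_zero, Matrix.cons_val_one,
      Matrix.head_cons, Matrix.cons_val_two, Matrix.tail_cons] at H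
    calc ∫⁻ s, g (t - s) * f s
        = ∫⁻ s, (g (t - s) ^ a * f s ^ b) ^ (1/q) * ((g (t - s) ^ a) ^ (1/a - 1/q)
            * (f s ^ b) ^ (1/b - 1/q)) := by
          congr 1; funext s
          rw [ENNReal.mul_rpow_of_nonneg _ _ hq', mul_mul_mul_comm,
            rpow_split _ ha hq' hay' (by ring), rpow_split _ hb hq' hbz' (by ring)]
      _ ≤ (∫⁻ s, g (t - s) ^ a * f s ^ b) ^ (1/q) * ((∫⁻ s, g (t - s) ^ a) ^ (1/a - 1/q)
            * (∫⁻ s, f s ^ b) ^ (1/b - 1/q)) := by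
          simpa only [mul_assoc] using H
      _ = (∫⁻ s, g (t - s) ^ a * f s ^ b) ^ (1/q) * (A ^ (1/a - 1/q) * B ^ (1/b - 1/q)) := by
          rw [htrans t]
  -- Step 2: raise to power q and integrate
  have hqa1 : (1:ℝ) ≤ q/a := by
    rw [le_div_iff₀ ha]; rw [div_le_div_iff₀ hq ha] at hay; linarith
  have hqb1 : (1:ℝ) ≤ q/b := by
    rw [le_div_iff₀ hb]; rw [div_le_div_iff₀ hq hb] at hbz; linarith
  calc ∫⁻ t, (∫⁻ s, g (t - s) * f s) ^ q
      ≤ ∫⁻ t, (∫⁻ s, g (t - s) ^ a * f s ^ b) * (A ^ (q/a - 1) * B ^ (q/b - 1)) := by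
        apply lintegral_mono
        intro t
        calc (∫⁻ s, g (t - s) * f s) ^ q
            ≤ ((∫⁻ s, g (t - s) ^ a * f s ^ b) ^ (1/q)
                * (A ^ (1/a - 1/q) * B ^ (1/b - 1/q))) ^ q :=
              ENNReal.rpow_le_rpow (step1 t) hq.le
          _ = (∫⁻ s, g (t - s) ^ a * f s ^ b) * (A ^ (q/a - 1) * B ^ (q/b - 1)) := by
              have e1 : (1/a - 1/q) * q = q/a - 1 := by field_simp
              have e2 : (1/b - 1/q) * q = q/b - 1 := by field_simp
              rw [ENNReal.mul_rpow_of_nonneg _ _ hq.le, ENNReal.mul_rpow_of_nonneg _ _ hq.le,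
                ← ENNReal.rpow_mul, ← ENNReal.rpow_mul, ← ENNReal.rpow_mul,
                one_div_mul_cancel hq.ne', ENNReal.rpow_one, e1, e2]
    _ = (∫⁻ t, ∫⁻ s, g (t - s) ^ a * f s ^ b) * (A ^ (q/a - 1) * B ^ (q/b - 1)) :=
        lintegral_mul_const _ hF0'
    _ = (A * B) * (A ^ (q/a - 1) * B ^ (q/b - 1)) := by
        rw [lintegral_lintegral_swap hF0.aemeasurable]
        congr 1
        calc ∫⁻ s, ∫⁻ t, g (t - s) ^ a * f s ^ b
            = ∫⁻ s, A * f s ^ b := by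
              congr 1; funext s
              have hm : Measurable fun t : ℝ => g (t - s) ^ a :=
                (hg.comp (measurable_id.sub measurable_const)).pow_const a
              rw [lintegral_mul_const _ hm, htrans2 s]
          _ = A * B := lintegral_const_mul _ hfb
    _ = A ^ (q/a) * B ^ (q/b) := by
        rw [mul_mul_mul_comm]
        congr 1
        · nth_rewrite 1 [← ENNReal.rpow_one A]
          rw [← ENNReal.rpow_add_of_nonneg _ _ zero_le_one (by linarith)]
          ring_nf
        · nth_rewrite 1 [← ENNReal.rpow_one B]
          rw [← ENNReal.rpow_add_of_nonneg _ _ zero_le_one (by linarith)]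
          ring_nf

lemma lintegral_abs_eq (F : ℝ → ℝ≥0∞) (hF : Measurable F) :
    ∫⁻ r : ℝ, F |r| = 2 * ∫⁻ r in Ioi (0:ℝ), F r := by
  have h1 : ∫⁻ r : ℝ, F |r| = (∫⁻ r in Iio (0:ℝ), F |r|) + ∫⁻ r in Ici (0:ℝ), F |r| := by
    rw [← lintegral_add_compl (fun r => F |r|) measurableSet_Iio, compl_Iio]
  have h2 : ∫⁻ r in Ici (0:ℝ), F |r| = ∫⁻ r in Ioi (0:ℝ), F r := by
    rw [setLIntegral_congr_fun measurableSet_Ici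
      (fun x hx => by rw [abs_of_nonneg hx]),
      ← setLIntegral_congr (Ioi_ae_eq_Ici (a := (0:ℝ)))]
  have h3 : ∫⁻ r in Iio (0:ℝ), F |r| = ∫⁻ r in Ioi (0:ℝ), F r := by
    have hemb : MeasurableEmbedding (fun x : ℝ => -x) :=
      (Homeomorph.neg ℝ).measurableEmbedding
    have := (Measure.measurePreserving_neg (volume : Measure ℝ)).setLIntegral_comp_preimage_emb
      hemb F (Ioi (0:ℝ))
    have hpre : (fun x : ℝ => -x) ⁻¹' Ioi (0:ℝ) = Iio (0:ℝ) := by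
      ext x; simp
    rw [hpre] at this
    rw [← this]
    refine setLIntegral_congr_fun measurableSet_Iio
      (fun x hx => ?_)
    rw [abs_of_neg hx]
  rw [h1, h2, h3, two_mul]

lemma aux_near_lt {c : ℝ} (hc0 : 0 ≤ c) (hc1 : c < 1) :
    ∫⁻ x in Ioo (0:ℝ) 1, ENNReal.ofReal (x ^ (-c)) ≤ ENNReal.ofReal (1/(1-c)) := by
  have hint : IntervalIntegrable (fun x : ℝ => x ^ (-c)) volume 0 1 :=
    intervalIntegral.intervalIntegrable_rpow' (by linarith)
  have hIoc : IntegrableOn (fun x : ℝ => x ^ (-c)) (Ioc (0:ℝ) 1) volume :=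
    (intervalIntegrable_iff_integrableOn_Ioc_of_le (by norm_num)).mp hint
  have hval : ∫ x in Ioc (0:ℝ) 1, x ^ (-c) = 1/(1-c) := by
    rw [← intervalIntegral.integral_of_le (by norm_num : (0:ℝ) ≤ 1)]
    rw [integral_rpow (Or.inl (by linarith))]
    rw [Real.one_rpow, Real.zero_rpow (by linarith : -c + 1 ≠ 0)]
    ring_nf
  calc ∫⁻ x in Ioo (0:ℝ) 1, ENNReal.ofReal (x ^ (-c))
      ≤ ∫⁻ x in Ioc (0:ℝ) 1, ENNReal.ofReal (x ^ (-c)) :=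
        lintegral_mono_set Ioo_subset_Ioc_self
    _ = ENNReal.ofReal (∫ x in Ioc (0:ℝ) 1, x ^ (-c)) := by
        rw [ofReal_integral_eq_lintegral_ofReal hIoc]
        refine (ae_restrict_iff' measurableSet_Ioc).mpr
          (Filter.Eventually.of_forall (fun x hx => Real.rpow_nonneg hx.1.le _))
    _ = ENNReal.ofReal (1/(1-c)) := by rw [hval]

lemma aux_near_gt {c l : ℝ} (hc : 1 < c) (hl0 : 0 < l) (hl1 : l ≤ 1) :
    ∫⁻ x in Ioc l 1, ENNReal.ofReal (x ^ (-c)) ≤ ENNReal.ofReal (l ^ (1-c) / (c-1)) := by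
  have h0mem : (0:ℝ) ∉ Set.uIcc l 1 := by
    rw [Set.mem_uIcc]; push_neg
    refine ⟨fun h => absurd h (by linarith), fun h => absurd h (by linarith)⟩
  have hint : IntervalIntegrable (fun x : ℝ => x ^ (-c)) volume l 1 :=
    intervalIntegral.intervalIntegrable_rpow (Or.inr h0mem)
  have hIoc : IntegrableOn (fun x : ℝ => x ^ (-c)) (Ioc l 1) volume :=
    (intervalIntegrable_iff_integrableOn_Ioc_of_le hl1).mp hint
  have hval : ∫ x in Ioc l 1, x ^ (-c) = (1 - l ^ (-c+1)) / (-c+1) := by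
    rw [← intervalIntegral.integral_of_le hl1, integral_rpow (Or.inr ⟨by linarith, h0mem⟩),
      Real.one_rpow]
  calc ∫⁻ x in Ioc l 1, ENNReal.ofReal (x ^ (-c))
      = ENNReal.ofReal ((1 - l ^ (-c+1)) / (-c+1)) := by
        rw [← hval, ofReal_integral_eq_lintegral_ofReal hIoc]
        refine (ae_restrict_iff' measurableSet_Ioc).mpr
          (Filter.Eventually.of_forall (fun x hx => Real.rpow_nonneg (by linarith [hx.1]) _))
    _ ≤ ENNReal.ofReal (l ^ (1-c) / (c-1)) := by
        apply ENNReal.ofReal_le_ofReal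
        have heq : (1 - l ^ (-c+1)) / (-c+1) = (l ^ (1-c) - 1) / (c-1) := by
          rw [show (-c+1 : ℝ) = 1 - c by ring]
          rw [div_eq_div_iff (by linarith) (by linarith)]; ring
        rw [heq]
        gcongr
        · linarith
    
lemma aux_far : ∫⁻ x in Ici (1:ℝ), ENNReal.ofReal (Real.exp (-(1/2) * x)) ≤ ENNReal.ofReal 2 := by
  have hint : IntegrableOn (fun x : ℝ => Real.exp (-(1/2) * x)) (Ioi (0:ℝ)) volume :=
    exp_neg_integrableOn_Ioi 0 (by norm_num)
  have hval : ∫ x in Ioi (0:ℝ), Real.exp (-(1/2) * x) = 2 := by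
    have h := integral_comp_mul_left_Ioi (fun y : ℝ => Real.exp (-y)) 0
      (by norm_num : (0:ℝ) < 1/2)
    simp only [mul_zero, integral_exp_neg_Ioi, neg_zero, Real.exp_zero, smul_eq_mul] at h
    calc ∫ x in Ioi (0:ℝ), Real.exp (-(1/2) * x)
        = ∫ x in Ioi (0:ℝ), (fun y : ℝ => Real.exp (-y)) (1/2 * x) := by
          congr 1; funext x; ring_nf
      _ = 2 := by rw [h]; norm_num
  calc ∫⁻ x in Ici (1:ℝ), ENNReal.ofReal (Real.exp (-(1/2) * x))
      ≤ ∫⁻ x in Ioi (0:ℝ), ENNReal.ofReal (Real.exp (-(1/2) * x)) :=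
        lintegral_mono_set (fun x hx => by simp at hx ⊢; linarith)
    _ = ENNReal.ofReal (∫ x in Ioi (0:ℝ), Real.exp (-(1/2) * x)) :=
        (ofReal_integral_eq_lintegral_ofReal hint
          (Filter.Eventually.of_forall (fun x => (Real.exp_pos _).le))).symm
    _ = ENNReal.ofReal 2 := by rw [hval]

lemma kernel_est {q : ℝ} (hq2 : 2 ≤ q) (hq4 : q ≠ 4) :
    ∃ K : ℝ, 0 < K ∧ ∀ lam : ℝ, 1 ≤ lam → ∀ p : ℝ → ℝ, Measurable p → (∀ r, 0 ≤ p r) →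
      (∀ r : ℝ, |r| < 1 → p r ≤ lam * (1 + lam * |r|) ^ (-(1:ℝ)/2)) →
      (∀ r : ℝ, 1 ≤ |r| → p r ≤ lam ^ ((1:ℝ)/2) * Real.exp (-|r| / 2)) →
      ∫⁻ r : ℝ, ENNReal.ofReal (p |r|) ^ (q/2) ≤
        ENNReal.ofReal ((K * lam ^ ((2 * (if q < 4 then (1:ℝ)/4 else 1/2 - 1/q)) * (q/2)))) := by
  have hq0 : (0:ℝ) < q := by linarith
  set a : ℝ := q/2 with ha
  have ha1 : (1:ℝ) ≤ a := by rw [ha]; linarith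
  have ha0 : (0:ℝ) < a := by linarith
  set Kn : ℝ := if q < 4 then 1/(1 - a/2) else 1 + 1/(a/2 - 1) with hKn
  set E : ℝ := (2 * (if q < 4 then (1:ℝ)/4 else 1/2 - 1/q)) * (q/2) with hE
  have hKnpos : 0 < Kn := by
    rw [hKn]; split_ifs with h
    · have h1 : a/2 < 1 := by rw [ha]; linarith
      exact div_pos one_pos (by linarith)
    · have h4 : 4 < q := lt_of_le_of_ne (not_lt.mp h) (Ne.symm hq4)
      have h1 : 1 < a/2 := by rw [ha]; linarith
      have h2 : 0 < 1/(a/2 - 1) := div_pos one_pos (by linarith)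
      linarith
  refine ⟨2 * (Kn + 2), by positivity, ?_⟩
  intro lam hlam p hp hp0 hnear hfar
  have hlam0 : (0:ℝ) < lam := by linarith
  have hE_cases : (q < 4 ∧ E = a/2) ∨ (4 < q ∧ E = a - 1) := by
    rcases lt_or_gt_of_ne hq4 with h | h
    · left; refine ⟨h, ?_⟩; rw [hE, if_pos h, ha]; ring
    · right; refine ⟨h, ?_⟩; rw [hE, if_neg (not_lt.mpr h.le), ha]; field_simp
  have hhalfE : a/2 ≤ E := by
    rcases hE_cases with ⟨_, h⟩ | ⟨h4, h⟩
    · rw [h]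
    · rw [h]; rw [ha]; linarith
  have hF : Measurable fun r : ℝ => ENNReal.ofReal (p r) ^ a :=
    (hp.ennreal_ofReal).pow_const a
  -- key pointwise bounds
  have hkey1 : ∀ r : ℝ, 0 < r → r ≤ 1 → p r ≤ lam ^ ((1:ℝ)/2) * r ^ (-(1:ℝ)/2) := by
    intro r hr0 hr1
    rcases lt_or_eq_of_le hr1 with hlt | heq
    · have h1 := hnear r (by rw [abs_of_pos hr0]; exact hlt)
      rw [abs_of_pos hr0] at h1
      have h2 : (1 + lam * r) ^ (-(1:ℝ)/2) ≤ (lam * r) ^ (-(1:ℝ)/2) :=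
        Real.rpow_le_rpow_of_nonpos (by positivity) (by linarith) (by norm_num)
      have h3 : (lam * r) ^ (-(1:ℝ)/2) = lam ^ (-(1:ℝ)/2) * r ^ (-(1:ℝ)/2) :=
        Real.mul_rpow hlam0.le hr0.le
      have h4 : lam * (lam ^ (-(1:ℝ)/2) * r ^ (-(1:ℝ)/2)) =
          lam ^ ((1:ℝ)/2) * r ^ (-(1:ℝ)/2) := by
        rw [← mul_assoc]
        congr 1
        nth_rewrite 1 [← Real.rpow_one lam]
        rw [← Real.rpow_add hlam0]
        norm_num
      calc p r ≤ lam * (1 + lam * r) ^ (-(1:ℝ)/2) := h1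
        _ ≤ lam * (lam * r) ^ (-(1:ℝ)/2) := by
            apply mul_le_mul_of_nonneg_left h2 hlam0.le
        _ = lam ^ ((1:ℝ)/2) * r ^ (-(1:ℝ)/2) := by rw [h3, h4]
    · subst heq
      have h1 := hfar 1 (by norm_num)
      simp only [abs_one] at h1
      have h2 : Real.exp (-1/2) ≤ 1 := by
        rw [show (-1/2 : ℝ) = -(1/2) by ring, Real.exp_neg]
        rw [inv_le_one_iff₀]
        right
        have := Real.one_le_exp (by norm_num : (0:ℝ) ≤ 1/2)
        linarith
      calc p 1 ≤ lam ^ ((1:ℝ)/2) * Real.exp (-1/2) := h1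
        _ ≤ lam ^ ((1:ℝ)/2) * 1 := by
            apply mul_le_mul_of_nonneg_left h2 (Real.rpow_nonneg hlam0.le _)
        _ = lam ^ ((1:ℝ)/2) * (1:ℝ) ^ (-(1:ℝ)/2) := by rw [Real.one_rpow]
  have hkey2 : ∀ r : ℝ, 0 < r → r ≤ 1 → p r ≤ lam := by
    intro r hr0 hr1
    rcases lt_or_eq_of_le hr1 with hlt | heq
    · have h1 := hnear r (by rw [abs_of_pos hr0]; exact hlt)
      rw [abs_of_pos hr0] at h1
      have h2 : (1 + lam * r) ^ (-(1:ℝ)/2) ≤ 1 :=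
        Real.rpow_le_one_of_one_le_of_nonpos (by nlinarith) (by norm_num)
      calc p r ≤ lam * (1 + lam * r) ^ (-(1:ℝ)/2) := h1
        _ ≤ lam * 1 := mul_le_mul_of_nonneg_left h2 hlam0.le
        _ = lam := mul_one lam
    · subst heq
      have h1 := hfar 1 (by norm_num)
      simp only [abs_one] at h1
      have h2 : Real.exp (-1/2) ≤ 1 := by
        rw [show (-1/2 : ℝ) = -(1/2) by ring, Real.exp_neg, inv_le_one_iff₀]
        right; linarith [Real.one_le_exp (by norm_num : (0:ℝ) ≤ 1/2)]
      have h3 : lam ^ ((1:ℝ)/2) ≤ lam := by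
        nth_rewrite 2 [← Real.rpow_one lam]
        exact Real.rpow_le_rpow_of_exponent_le hlam (by norm_num)
      calc p 1 ≤ lam ^ ((1:ℝ)/2) * Real.exp (-1/2) := h1
        _ ≤ lam ^ ((1:ℝ)/2) * 1 :=
            mul_le_mul_of_nonneg_left h2 (Real.rpow_nonneg hlam0.le _)
        _ ≤ lam := by rw [mul_one]; exact h3
  -- pointwise bound raised to power a, in ENNReal
  have hpow1 : ∀ r : ℝ, 0 < r → r ≤ 1 →
      ENNReal.ofReal (p r) ^ a ≤ ENNReal.ofReal (lam ^ (a/2)) * ENNReal.ofReal (r ^ (-(a/2))) := by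
    intro r hr0 hr1
    calc ENNReal.ofReal (p r) ^ a
        ≤ ENNReal.ofReal (lam ^ ((1:ℝ)/2) * r ^ (-(1:ℝ)/2)) ^ a :=
          ENNReal.rpow_le_rpow (ENNReal.ofReal_le_ofReal (hkey1 r hr0 hr1)) ha0.le
      _ = ENNReal.ofReal ((lam ^ ((1:ℝ)/2) * r ^ (-(1:ℝ)/2)) ^ a) :=
          ENNReal.ofReal_rpow_of_nonneg (by positivity) ha0.le
      _ = ENNReal.ofReal (lam ^ (a/2) * r ^ (-(a/2))) := by
          congr 1
          rw [Real.mul_rpow (by positivity) (by positivity),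
            ← Real.rpow_mul hlam0.le, ← Real.rpow_mul hr0.le]
          congr 2 <;> ring
      _ = ENNReal.ofReal (lam ^ (a/2)) * ENNReal.ofReal (r ^ (-(a/2))) :=
          ENNReal.ofReal_mul (by positivity)
  -- far integral bound
  have hfar_bound : ∫⁻ r in Ici (1:ℝ), ENNReal.ofReal (p r) ^ a ≤
      ENNReal.ofReal (2 * lam ^ E) := by
    have hmono : ∀ r ∈ Ici (1:ℝ), ENNReal.ofReal (p r) ^ a ≤
        ENNReal.ofReal (lam ^ (a/2)) * ENNReal.ofReal (Real.exp (-(1/2) * r)) := by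
      intro r hr
      have hr1 : (1:ℝ) ≤ r := hr
      have hr0 : (0:ℝ) < r := by linarith
      have h1 := hfar r (by rw [abs_of_pos hr0]; exact hr1)
      rw [abs_of_pos hr0] at h1
      calc ENNReal.ofReal (p r) ^ a
          ≤ ENNReal.ofReal (lam ^ ((1:ℝ)/2) * Real.exp (-r/2)) ^ a :=
            ENNReal.rpow_le_rpow (ENNReal.ofReal_le_ofReal h1) ha0.le
        _ = ENNReal.ofReal ((lam ^ ((1:ℝ)/2) * Real.exp (-r/2)) ^ a) :=
            ENNReal.ofReal_rpow_of_nonneg (by positivity) ha0.le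
        _ ≤ ENNReal.ofReal (lam ^ (a/2) * Real.exp (-(1/2) * r)) := by
            apply ENNReal.ofReal_le_ofReal
            rw [Real.mul_rpow (by positivity) (Real.exp_pos _).le,
              ← Real.rpow_mul hlam0.le, ← Real.exp_mul]
            have e1 : (1:ℝ)/2 * a = a/2 := by ring
            rw [e1]
            apply mul_le_mul_of_nonneg_left _ (by positivity)
            apply Real.exp_le_exp.mpr
            nlinarith
        _ = ENNReal.ofReal (lam ^ (a/2)) * ENNReal.ofReal (Real.exp (-(1/2) * r)) :=
            ENNReal.ofReal_mul (by positivity)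
    calc ∫⁻ r in Ici (1:ℝ), ENNReal.ofReal (p r) ^ a
        ≤ ∫⁻ r in Ici (1:ℝ), ENNReal.ofReal (lam ^ (a/2)) *
            ENNReal.ofReal (Real.exp (-(1/2) * r)) :=
          setLIntegral_mono (measurable_const.mul
            ((Real.measurable_exp.comp (measurable_const.mul measurable_id)).ennreal_ofReal)) hmono
      _ = ENNReal.ofReal (lam ^ (a/2)) * ∫⁻ r in Ici (1:ℝ),
            ENNReal.ofReal (Real.exp (-(1/2) * r)) :=
          lintegral_const_mul _
            ((Real.measurable_exp.comp (measurable_const.mul measurable_id)).ennreal_ofReal)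
      _ ≤ ENNReal.ofReal (lam ^ (a/2)) * ENNReal.ofReal 2 := mul_le_mul_right aux_far _
      _ = ENNReal.ofReal (2 * lam ^ (a/2)) := by
          rw [← ENNReal.ofReal_mul (by positivity), mul_comm]
      _ ≤ ENNReal.ofReal (2 * lam ^ E) := by
          apply ENNReal.ofReal_le_ofReal
          have := Real.rpow_le_rpow_of_exponent_le hlam hhalfE
          linarith
  -- near integral bound
  have hnear_bound : ∫⁻ r in Ioo (0:ℝ) 1, ENNReal.ofReal (p r) ^ a ≤
      ENNReal.ofReal (Kn * lam ^ E) := by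
    rcases hE_cases with ⟨hlt4, hEeq⟩ | ⟨hgt4, hEeq⟩
    · -- q < 4
      have hc1 : a/2 < 1 := by rw [ha]; linarith
      calc ∫⁻ r in Ioo (0:ℝ) 1, ENNReal.ofReal (p r) ^ a
          ≤ ∫⁻ r in Ioo (0:ℝ) 1, ENNReal.ofReal (lam ^ (a/2)) *
              ENNReal.ofReal (r ^ (-(a/2))) :=
            setLIntegral_mono (measurable_const.mul
              ((measurable_id.pow_const _).ennreal_ofReal))
              (fun r hr => hpow1 r hr.1 hr.2.le)
        _ = ENNReal.ofReal (lam ^ (a/2)) * ∫⁻ r in Ioo (0:ℝ) 1,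
              ENNReal.ofReal (r ^ (-(a/2))) :=
            lintegral_const_mul _ ((measurable_id.pow_const _).ennreal_ofReal)
        _ ≤ ENNReal.ofReal (lam ^ (a/2)) * ENNReal.ofReal (1/(1 - a/2)) :=
            mul_le_mul_right (aux_near_lt (by positivity) hc1) _
        _ = ENNReal.ofReal (Kn * lam ^ E) := by
            rw [← ENNReal.ofReal_mul (by positivity), hEeq, hKn, if_pos hlt4, mul_comm]
    · -- q > 4
      have hc1 : 1 < a/2 := by rw [ha]; linarith
      have hinv0 : (0:ℝ) < lam⁻¹ := by positivity
      have hinv1 : lam⁻¹ ≤ 1 := by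
        rw [inv_le_one_iff₀]; right; linarith
      have hsub : Ioo (0:ℝ) 1 ⊆ Ioc (0:ℝ) lam⁻¹ ∪ Ioc lam⁻¹ 1 := by
        intro x hx
        rcases le_or_gt x lam⁻¹ with h | h
        · exact Or.inl ⟨hx.1, h⟩
        · exact Or.inr ⟨h, hx.2.le⟩
      have hp1 : ∫⁻ r in Ioc (0:ℝ) lam⁻¹, ENNReal.ofReal (p r) ^ a ≤
          ENNReal.ofReal (lam ^ (a - 1)) := by
        calc ∫⁻ r in Ioc (0:ℝ) lam⁻¹, ENNReal.ofReal (p r) ^ a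
            ≤ ∫⁻ _ in Ioc (0:ℝ) lam⁻¹, ENNReal.ofReal (lam ^ a) :=
              setLIntegral_mono measurable_const (fun r hr => by
                calc ENNReal.ofReal (p r) ^ a
                    ≤ ENNReal.ofReal lam ^ a :=
                      ENNReal.rpow_le_rpow (ENNReal.ofReal_le_ofReal
                        (hkey2 r hr.1 (hr.2.trans hinv1))) ha0.le
                  _ = ENNReal.ofReal (lam ^ a) :=
                      ENNReal.ofReal_rpow_of_nonneg hlam0.le ha0.le)
          _ = ENNReal.ofReal (lam ^ a) * volume (Ioc (0:ℝ) lam⁻¹) := setLIntegral_const _ _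
          _ = ENNReal.ofReal (lam ^ a) * ENNReal.ofReal lam⁻¹ := by
              rw [Real.volume_Ioc, sub_zero]
          _ = ENNReal.ofReal (lam ^ (a - 1)) := by
              rw [← ENNReal.ofReal_mul (by positivity)]
              congr 1
              rw [← Real.rpow_neg_one lam, ← Real.rpow_add hlam0,
                show a + -1 = a - 1 by ring]
      have hp2 : ∫⁻ r in Ioc lam⁻¹ 1, ENNReal.ofReal (p r) ^ a ≤
          ENNReal.ofReal (lam ^ (a - 1) * (1/(a/2 - 1))) := by
        calc ∫⁻ r in Ioc lam⁻¹ 1, ENNReal.ofReal (p r) ^ a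
            ≤ ∫⁻ r in Ioc lam⁻¹ 1, ENNReal.ofReal (lam ^ (a/2)) *
                ENNReal.ofReal (r ^ (-(a/2))) :=
              setLIntegral_mono (measurable_const.mul
                ((measurable_id.pow_const _).ennreal_ofReal))
                (fun r hr => hpow1 r (lt_trans hinv0 hr.1) hr.2)
          _ = ENNReal.ofReal (lam ^ (a/2)) * ∫⁻ r in Ioc lam⁻¹ 1,
                ENNReal.ofReal (r ^ (-(a/2))) :=
              lintegral_const_mul _ ((measurable_id.pow_const _).ennreal_ofReal)
          _ ≤ ENNReal.ofReal (lam ^ (a/2)) *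
                ENNReal.ofReal ((lam⁻¹) ^ (1 - a/2) / (a/2 - 1)) :=
              mul_le_mul_right (aux_near_gt hc1 hinv0 hinv1) _
          _ = ENNReal.ofReal (lam ^ (a - 1) * (1/(a/2 - 1))) := by
              rw [← ENNReal.ofReal_mul (by positivity)]
              congr 1
              rw [← Real.rpow_neg_one lam, ← Real.rpow_mul hlam0.le]
              rw [show lam ^ (-1 * (1 - a/2)) / (a/2 - 1) =
                  lam ^ (-1 * (1 - a/2)) * (1/(a/2 - 1)) by ring, ← mul_assoc,
                ← Real.rpow_add hlam0, show a/2 + -1 * (1 - a/2) = a - 1 by ring]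
      calc ∫⁻ r in Ioo (0:ℝ) 1, ENNReal.ofReal (p r) ^ a
          ≤ ∫⁻ r in Ioc (0:ℝ) lam⁻¹ ∪ Ioc lam⁻¹ 1, ENNReal.ofReal (p r) ^ a :=
            lintegral_mono_set hsub
        _ ≤ (∫⁻ r in Ioc (0:ℝ) lam⁻¹, ENNReal.ofReal (p r) ^ a) +
              ∫⁻ r in Ioc lam⁻¹ 1, ENNReal.ofReal (p r) ^ a :=
            lintegral_union_le _ _ _
        _ ≤ ENNReal.ofReal (lam ^ (a - 1)) +
              ENNReal.ofReal (lam ^ (a - 1) * (1/(a/2 - 1))) := add_le_add hp1 hp2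
        _ = ENNReal.ofReal (Kn * lam ^ E) := by
            rw [← ENNReal.ofReal_add (by positivity)
              (mul_nonneg (by positivity) (div_pos one_pos (by linarith)).le), hEeq, hKn,
              if_neg (not_lt.mpr hgt4.le)]
            congr 1; ring
  -- combine
  calc ∫⁻ r : ℝ, ENNReal.ofReal (p |r|) ^ (q/2)
      = 2 * ∫⁻ r in Ioi (0:ℝ), ENNReal.ofReal (p r) ^ a := lintegral_abs_eq _ hF
    _ = 2 * ((∫⁻ r in Ioo (0:ℝ) 1, ENNReal.ofReal (p r) ^ a) +
          ∫⁻ r in Ici (1:ℝ), ENNReal.ofReal (p r) ^ a) := by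
        rw [← Ioo_union_Ici_eq_Ioi (by norm_num : (0:ℝ) < 1),
          lintegral_union measurableSet_Ici ((Iio_disjoint_Ici le_rfl).mono_left Ioo_subset_Iio_self)]
    _ ≤ 2 * (ENNReal.ofReal (Kn * lam ^ E) + ENNReal.ofReal (2 * lam ^ E)) := by
        gcongr
    _ = ENNReal.ofReal (2 * (Kn + 2) * lam ^ E) := by
        rw [← ENNReal.ofReal_add (mul_nonneg hKnpos.le (by positivity)) (by positivity)]
        rw [show (2 : ℝ≥0∞) = ENNReal.ofReal 2 by simp,
          ← ENNReal.ofReal_mul (by norm_num)]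
        congr 1; ring

/-- `L^{q'} → L^q` bound for the integral operator with kernel `p(|t-s|)`. -/
theorem stmt_1 (q : ℝ) (hq2 : 2 ≤ q) (hq4 : q ≠ 4) :
    ∃ C : ℝ, 0 < C ∧ ∀ lam : ℝ, 1 ≤ lam →
      ∀ p : ℝ → ℝ, Measurable p → (∀ r, 0 ≤ p r) →
        (∀ r : ℝ, |r| < 1 → p r ≤ lam * (1 + lam * |r|) ^ (-(1:ℝ)/2)) →
        (∀ r : ℝ, 1 ≤ |r| → p r ≤ lam ^ ((1:ℝ)/2) * Real.exp (-|r| / 2)) →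
        ∀ h : ℝ → ℝ, MemLp h (ENNReal.ofReal (q / (q - 1))) volume →
          MemLp (fun t : ℝ => ∫ s : ℝ, p |t - s| * h s) (ENNReal.ofReal q) volume ∧
          eLpNorm (fun t : ℝ => ∫ s : ℝ, p |t - s| * h s) (ENNReal.ofReal q) volume ≤
            ENNReal.ofReal (C * lam ^ (2 * (if q < 4 then (1:ℝ)/4 else 1/2 - 1/q))) *
              eLpNorm h (ENNReal.ofReal (q / (q - 1))) volume := by
  obtain ⟨K, hK, hker⟩ := kernel_est hq2 hq4
  have hq0 : (0:ℝ) < q := by linarith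
  have hq1 : (1:ℝ) < q := by linarith
  set a : ℝ := q/2 with haa
  set b : ℝ := q/(q-1) with hbb
  have ha0 : (0:ℝ) < a := by positivity
  have hb0 : (0:ℝ) < b := by rw [hbb]; exact div_pos hq0 (by linarith)
  have hay : 1/q ≤ 1/a := by
    rw [haa]; rw [div_le_div_iff₀ hq0 (by positivity)]; linarith
  have hbz : 1/q ≤ 1/b := by
    rw [hbb, one_div, one_div, inv_le_inv₀ (by positivity) (by positivity),
      div_le_iff₀ (by linarith : (0:ℝ) < q - 1)]
    nlinarith
  have hsum : 1/a + 1/b = 1 + 1/q := by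
    rw [haa, hbb]
    field_simp
    ring
  refine ⟨K ^ ((2:ℝ)/q), Real.rpow_pos_of_pos hK _, ?_⟩
  intro lam hlam p hp hp0 hnear hfar h hh
  have hlam0 : (0:ℝ) < lam := by linarith
  -- replace h by a strongly measurable representative
  set h' : ℝ → ℝ := hh.1.mk h with hh'def
  have hh' : h =ᵐ[volume] h' := hh.1.ae_eq_mk
  have hsm : StronglyMeasurable h' := hh.1.stronglyMeasurable_mk
  have hm' : Measurable h' := hsm.measurable
  have hTeq : (fun t : ℝ => ∫ s : ℝ, p |t - s| * h s) =
      fun t : ℝ => ∫ s : ℝ, p |t - s| * h' s := by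
    funext t
    exact integral_congr_ae (hh'.mono fun s hs => by dsimp only; rw [hs])
  -- measurability of the convolution
  have hTsm : StronglyMeasurable fun t : ℝ => ∫ s : ℝ, p |t - s| * h' s := by
    have hker_sm : StronglyMeasurable fun z : ℝ × ℝ => p |z.1 - z.2| * h' z.2 :=
      ((hp.comp ((measurable_fst.sub measurable_snd).abs)).mul
        (hm'.comp measurable_snd)).stronglyMeasurable
    exact hker_sm.integral_prod_right'
  -- ENNReal setup
  set g : ℝ → ℝ≥0∞ := fun r => ENNReal.ofReal (p |r|) with hgdef
  set f : ℝ → ℝ≥0∞ := fun s => (‖h' s‖₊ : ℝ≥0∞) with hfdef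
  have hgmeas : Measurable g := (hp.comp measurable_abs).ennreal_ofReal
  have hfmeas : Measurable f := hm'.nnnorm.coe_nnreal_ennreal
  have hpoint : ∀ t : ℝ, (‖∫ s : ℝ, p |t - s| * h' s‖₊ : ℝ≥0∞) ≤
      ∫⁻ s, g (t - s) * f s := by
    intro t
    calc (‖∫ s : ℝ, p |t - s| * h' s‖₊ : ℝ≥0∞)
        ≤ ∫⁻ s, (‖p |t - s| * h' s‖₊ : ℝ≥0∞) :=
          enorm_integral_le_lintegral_enorm _
      _ = ∫⁻ s, g (t - s) * f s := by
          congr 1; funext s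
          rw [nnnorm_mul, ENNReal.coe_mul, ← enorm_eq_nnnorm (p |t - s|), Real.enorm_eq_ofReal (hp0 _)]
  -- exponents as ENNReal
  have hqE0 : ENNReal.ofReal q ≠ 0 := by
    simp [ENNReal.ofReal_eq_zero]; linarith
  have hqET : ENNReal.ofReal q ≠ ∞ := ENNReal.ofReal_ne_top
  have hqtoReal : (ENNReal.ofReal q).toReal = q := ENNReal.toReal_ofReal hq0.le
  have hbE0 : ENNReal.ofReal b ≠ 0 := by
    simp [ENNReal.ofReal_eq_zero]; linarith
  have hbET : ENNReal.ofReal b ≠ ∞ := ENNReal.ofReal_ne_top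
  have hbtoReal : (ENNReal.ofReal b).toReal = b := ENNReal.toReal_ofReal hb0.le
  -- norms
  set A : ℝ≥0∞ := ∫⁻ r, g r ^ a with hA
  set B : ℝ≥0∞ := ∫⁻ s, f s ^ b with hB
  have hBnorm : eLpNorm h' (ENNReal.ofReal b) volume = B ^ (1/b) := by
    rw [eLpNorm_eq_lintegral_rpow_enorm_toReal hbE0 hbET, hbtoReal]; rfl
  have hAbound : A ≤ ENNReal.ofReal
      (K * lam ^ ((2 * (if q < 4 then (1:ℝ)/4 else 1/2 - 1/q)) * (q/2))) :=
    hker lam hlam p hp hp0 hnear hfar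
  set μ2 : ℝ := 2 * (if q < 4 then (1:ℝ)/4 else 1/2 - 1/q) with hμ2
  have hμ2pos : 0 ≤ μ2 := by
    rw [hμ2]; split_ifs with hc
    · norm_num
    · have : (0:ℝ) < 1/q := by positivity
      have h2 : 1/q ≤ 1/2 := by
        rw [div_le_div_iff₀ hq0 (by norm_num)]; linarith
      linarith
  have hAroot : A ^ (1/a) ≤ ENNReal.ofReal (K ^ ((2:ℝ)/q) * lam ^ μ2) := by
    calc A ^ (1/a) ≤ (ENNReal.ofReal (K * lam ^ (μ2 * a))) ^ (1/a) :=
          ENNReal.rpow_le_rpow hAbound (by positivity)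
      _ = ENNReal.ofReal ((K * lam ^ (μ2 * a)) ^ (1/a)) :=
          ENNReal.ofReal_rpow_of_nonneg (by positivity) (by positivity)
      _ = ENNReal.ofReal (K ^ ((2:ℝ)/q) * lam ^ μ2) := by
          congr 1
          rw [Real.mul_rpow hK.le (by positivity), ← Real.rpow_mul hlam0.le]
          congr 1
          · rw [haa]; congr 1; field_simp
          · rw [haa]; field_simp
  -- main estimate
  have hmain : eLpNorm (fun t : ℝ => ∫ s : ℝ, p |t - s| * h' s) (ENNReal.ofReal q) volume ≤
      ENNReal.ofReal (K ^ ((2:ℝ)/q) * lam ^ μ2) * eLpNorm h' (ENNReal.ofReal b) volume := by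
    rw [eLpNorm_eq_lintegral_rpow_enorm_toReal hqE0 hqET, hqtoReal, hBnorm]
    calc (∫⁻ t, (‖∫ s : ℝ, p |t - s| * h' s‖₊ : ℝ≥0∞) ^ q) ^ (1/q)
        ≤ (∫⁻ t, (∫⁻ s, g (t - s) * f s) ^ q) ^ (1/q) := by
          apply ENNReal.rpow_le_rpow _ (by positivity)
          exact lintegral_mono fun t => ENNReal.rpow_le_rpow (hpoint t) hq0.le
      _ ≤ ((∫⁻ r, g r ^ a) ^ (q/a) * (∫⁻ s, f s ^ b) ^ (q/b)) ^ (1/q) :=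
          ENNReal.rpow_le_rpow (young hgmeas hfmeas ha0 hb0 hq0 hay hbz hsum) (by positivity)
      _ = A ^ (1/a) * B ^ (1/b) := by
          rw [ENNReal.mul_rpow_of_nonneg _ _ (by positivity : (0:ℝ) ≤ 1/q),
            ← ENNReal.rpow_mul, ← ENNReal.rpow_mul]
          congr 2 <;> field_simp <;> ring
      _ ≤ ENNReal.ofReal (K ^ ((2:ℝ)/q) * lam ^ μ2) * B ^ (1/b) :=
          mul_le_mul_left hAroot _
  have heLp_eq : eLpNorm (fun t : ℝ => ∫ s : ℝ, p |t - s| * h s) (ENNReal.ofReal q) volume =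
      eLpNorm (fun t : ℝ => ∫ s : ℝ, p |t - s| * h' s) (ENNReal.ofReal q) volume := by
    rw [hTeq]
  have hhnorm : eLpNorm h' (ENNReal.ofReal b) volume = eLpNorm h (ENNReal.ofReal b) volume :=
    eLpNorm_congr_ae hh'.symm
  constructor
  · refine ⟨?_, ?_⟩
    · rw [hTeq]; exact hTsm.aestronglyMeasurable
    · rw [heLp_eq]
      apply lt_of_le_of_lt hmain
      apply ENNReal.mul_lt_top ENNReal.ofReal_lt_top
      rw [hhnorm]
      exact hh.2
  · rw [heLp_eq, ← hhnorm]
    exact hmain
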